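/- arXiv:0807.2682 — 5 statements merged into one kernel-verified Lean document; each statement's English description precedes it below -/
import Mathlib

section
/- (Multiplication theorem specialization) For 0 < q < 1, m ≥ 1, and odd positive integer n: E_{m,q} − ([2]_q/[2]_{q^n}) [n]_q^m E_{m,q^n} = ([2]_q/[2]_{q^n}) Σ_{k=0}^{m-1} binom(m,k) [n]_q^k E_{k,q^n}^{(-m)} Σ_{j=1}^{n-1} q^{-(m-k)j} (-1)^j [j]_q^{m-k}, where E_{k,q}^{(-m)} := [2]_q (1-q)^{-k} Σ_{j=0}^k binom(k,j)(-1)^j/(1+q^{j-m}) and E_{m,q} := E_{m,q}^{(-m)}. -/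
open Finset

private lemma rpow_sub_nat {q : ℝ} (hq : 0 < q) {i m : ℕ} (h : i ≤ m) :
    q ^ ((i : ℝ) - (m : ℝ)) = (q ^ (m - i))⁻¹ := by
  have h1 : (i : ℝ) - (m : ℝ) = -(((m - i : ℕ) : ℝ)) := by
    rw [Nat.cast_sub h]; ring
  rw [h1, Real.rpow_neg hq.le, Real.rpow_natCast]

private lemma key_geom {a : ℝ} (ha : 0 < a) {n : ℕ} (hn : Odd n) :
    ∑ j ∈ range n, (-1 : ℝ) ^ j * a ^ j = (1 + a ^ n) / (1 + a) := by
  have h1 : (-a : ℝ) ≠ 1 := by intro h; linarith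
  have h2 := geom_sum_eq h1 n
  calc ∑ j ∈ range n, (-1 : ℝ) ^ j * a ^ j = ∑ j ∈ range n, (-a : ℝ) ^ j := by
        refine sum_congr rfl fun j _ => ?_
        exact (neg_pow a j).symm
    _ = ((-a) ^ n - 1) / (-a - 1) := h2
    _ = (1 + a ^ n) / (1 + a) := by
        rw [hn.neg_pow]
        rw [show -a ^ n - 1 = -(1 + a ^ n) by ring, show -a - 1 = -(1 + a) by ring,
          neg_div_neg_eq]

private lemma alt_sum {n : ℕ} (hn : Odd n) : ∑ j ∈ range n, (-1 : ℝ) ^ j = 1 := by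
  rw [neg_one_geom_sum, if_neg (Nat.not_even_iff_odd.2 hn)]

private lemma swap_binom (m : ℕ) (g : ℕ → ℝ) (x : ℝ) :
    ∑ k ∈ range (m + 1), (m.choose k : ℝ) *
        (∑ i ∈ range (k + 1), (k.choose i : ℝ) * (-1) ^ i * g i) * x ^ (m - k)
      = ∑ i ∈ range (m + 1), (m.choose i : ℝ) * (-1) ^ i * g i * (x + 1) ^ (m - i) := by
  have h1 : ∀ k ∈ range (m+1), (m.choose k : ℝ) *
      (∑ i ∈ range (k + 1), (k.choose i : ℝ) * (-1) ^ i * g i) * x ^ (m - k)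
      = ∑ i ∈ range (k + 1),
          (m.choose k : ℝ) * (k.choose i : ℝ) * (-1) ^ i * g i * x ^ (m - k) := by
    intro k _
    rw [mul_sum, sum_mul]
    exact sum_congr rfl fun i _ => by ring
  rw [sum_congr rfl h1]
  rw [sum_comm' (t' := range (m+1)) (s' := fun i => Ico i (m+1))
    (by intro k i; simp only [mem_range, mem_Ico]; omega)]
  refine sum_congr rfl fun i hi => ?_
  have him : i ≤ m := by simpa [Nat.lt_succ_iff] using hi
  have h2 : ∀ k ∈ Ico i (m+1), (m.choose k : ℝ) * (k.choose i : ℝ) * (-1) ^ i * g i * x ^ (m - k)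
      = ((m.choose i : ℝ) * (-1) ^ i * g i) * (((m - i).choose (k - i) : ℝ) * x ^ (m - k)) := by
    intro k hk
    rw [mem_Ico] at hk
    have hc := Nat.choose_mul (n := m) hk.1
    have hc' : (m.choose k : ℝ) * (k.choose i : ℝ) = (m.choose i : ℝ) * ((m - i).choose (k - i) : ℝ) := by
      exact_mod_cast congrArg (Nat.cast (R := ℝ)) hc
    calc (m.choose k : ℝ) * (k.choose i : ℝ) * (-1) ^ i * g i * x ^ (m - k)
        = ((m.choose k : ℝ) * (k.choose i : ℝ)) * ((-1) ^ i * g i * x ^ (m - k)) := by ring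
      _ = ((m.choose i : ℝ) * ((m - i).choose (k - i) : ℝ)) * ((-1) ^ i * g i * x ^ (m - k)) := by
          rw [hc']
      _ = ((m.choose i : ℝ) * (-1) ^ i * g i) * (((m - i).choose (k - i) : ℝ) * x ^ (m - k)) := by
          ring
  rw [sum_congr rfl h2, ← mul_sum]
  congr 1
  rw [sum_Ico_eq_sum_range]
  have h3 : ∀ t ∈ range (m + 1 - i), ((m - i).choose (i + t - i) : ℝ) * x ^ (m - (i + t))
      = ((m - i).choose t : ℝ) * x ^ (m - i - t) := by
    intro t ht
    rw [show i + t - i = t by omega, show m - (i + t) = m - i - t by omega]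
  rw [sum_congr rfl h3]
  have h4 : m + 1 - i = (m - i) + 1 := by omega
  rw [h4]
  rw [show x + 1 = 1 + x from add_comm x 1, add_pow]
  exact sum_congr rfl fun t _ => by rw [one_pow]; ring


private lemma core (q : ℝ) (hq0 : 0 < q) (m : ℕ) {n : ℕ} (hn : Odd n) :
    ∑ k ∈ range (m + 1), (m.choose k : ℝ) *
        (∑ j ∈ range (k + 1), (k.choose j : ℝ) * (-1) ^ j / (1 + ((q ^ n) ^ (m - j))⁻¹)) *
        (∑ j ∈ range n, (-1 : ℝ) ^ j * ((1 - q ^ j) / q ^ j) ^ (m - k))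
      = ∑ j ∈ range (m + 1), (m.choose j : ℝ) * (-1) ^ j / (1 + (q ^ (m - j))⁻¹) := by
  have hp : ∀ N : ℕ, (0:ℝ) < q ^ N := fun N => pow_pos hq0 N
  have hpow : ∀ i : ℕ, ((q ^ (m - i))⁻¹ : ℝ) ^ n = ((q ^ n) ^ (m - i))⁻¹ := by
    intro i
    rw [← inv_pow, ← inv_pow, ← inv_pow, ← pow_mul, ← pow_mul, mul_comm]
  calc
    ∑ k ∈ range (m + 1), (m.choose k : ℝ) *
        (∑ j ∈ range (k + 1), (k.choose j : ℝ) * (-1) ^ j / (1 + ((q ^ n) ^ (m - j))⁻¹)) *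
        (∑ j ∈ range n, (-1 : ℝ) ^ j * ((1 - q ^ j) / q ^ j) ^ (m - k))
      = ∑ k ∈ range (m + 1), ∑ j ∈ range n, (-1 : ℝ) ^ j * ((m.choose k : ℝ) *
          (∑ i ∈ range (k + 1), (k.choose i : ℝ) * (-1) ^ i * (1 + ((q ^ n) ^ (m - i))⁻¹)⁻¹) *
          ((1 - q ^ j) / q ^ j) ^ (m - k)) := by
        refine sum_congr rfl fun k _ => ?_
        rw [show (∑ j ∈ range (k + 1), (k.choose j : ℝ) * (-1) ^ j / (1 + ((q ^ n) ^ (m - j))⁻¹))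
            = ∑ j ∈ range (k + 1), (k.choose j : ℝ) * (-1) ^ j * (1 + ((q ^ n) ^ (m - j))⁻¹)⁻¹
          from sum_congr rfl fun j _ => div_eq_mul_inv _ _, mul_sum]
        exact sum_congr rfl fun j _ => by ring
    _ = ∑ j ∈ range n, ∑ i ∈ range (m + 1), (-1 : ℝ) ^ j *
          ((m.choose i : ℝ) * (-1) ^ i * (1 + ((q ^ n) ^ (m - i))⁻¹)⁻¹ * ((q ^ (m - i))⁻¹) ^ j) := by
        rw [sum_comm]
        refine sum_congr rfl fun j _ => ?_
        have hqj := (hp j).ne'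
        have he : (1 - q ^ j) / q ^ j + 1 = (q ^ j)⁻¹ := by field_simp; ring
        have he2 : ∀ i : ℕ, ((1 - q ^ j) / q ^ j + 1) ^ (m - i) = ((q ^ (m - i))⁻¹) ^ j := by
          intro i
          rw [he, ← inv_pow, ← inv_pow, ← pow_mul, ← pow_mul, mul_comm]
        calc ∑ k ∈ range (m + 1), (-1 : ℝ) ^ j * ((m.choose k : ℝ) *
              (∑ i ∈ range (k + 1), (k.choose i : ℝ) * (-1) ^ i *
                (1 + ((q ^ n) ^ (m - i))⁻¹)⁻¹) * ((1 - q ^ j) / q ^ j) ^ (m - k))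
            = (-1 : ℝ) ^ j * ∑ k ∈ range (m + 1), (m.choose k : ℝ) *
              (∑ i ∈ range (k + 1), (k.choose i : ℝ) * (-1) ^ i *
                (1 + ((q ^ n) ^ (m - i))⁻¹)⁻¹) * ((1 - q ^ j) / q ^ j) ^ (m - k) := by
              rw [mul_sum]
          _ = (-1 : ℝ) ^ j * ∑ i ∈ range (m + 1), (m.choose i : ℝ) * (-1) ^ i *
                (1 + ((q ^ n) ^ (m - i))⁻¹)⁻¹ * ((1 - q ^ j) / q ^ j + 1) ^ (m - i) := by
              rw [swap_binom m (fun i => (1 + ((q ^ n) ^ (m - i))⁻¹)⁻¹) ((1 - q ^ j) / q ^ j)]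
          _ = ∑ i ∈ range (m + 1), (-1 : ℝ) ^ j * ((m.choose i : ℝ) * (-1) ^ i *
                (1 + ((q ^ n) ^ (m - i))⁻¹)⁻¹ * ((q ^ (m - i))⁻¹) ^ j) := by
              rw [mul_sum]
              exact sum_congr rfl fun i _ => by rw [he2 i]
    _ = ∑ i ∈ range (m + 1), (m.choose i : ℝ) * (-1) ^ i * (1 + ((q ^ n) ^ (m - i))⁻¹)⁻¹ *
          ∑ j ∈ range n, (-1 : ℝ) ^ j * ((q ^ (m - i))⁻¹) ^ j := by
        rw [sum_comm]
        refine sum_congr rfl fun i _ => ?_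
        rw [mul_sum]
        exact sum_congr rfl fun j _ => by ring
    _ = ∑ j ∈ range (m + 1), (m.choose j : ℝ) * (-1) ^ j / (1 + (q ^ (m - j))⁻¹) := by
        refine sum_congr rfl fun i _ => ?_
        rw [key_geom (inv_pos.mpr (hp (m - i))) hn, hpow i]
        have h1 : (0:ℝ) < 1 + ((q ^ n) ^ (m - i))⁻¹ := by positivity
        have h2 : (0:ℝ) < 1 + (q ^ (m - i))⁻¹ := by positivity
        rw [div_eq_mul_inv ((m.choose i : ℝ) * (-1) ^ i)]
        field_simp

private noncomputable def Sm (q : ℝ) (m : ℕ) : ℝ :=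
  ∑ j ∈ range (m + 1), (m.choose j : ℝ) * (-1) ^ j / (1 + (q ^ (m - j))⁻¹)

private noncomputable def Tk (q : ℝ) (n m k : ℕ) : ℝ :=
  ∑ j ∈ range (k + 1), (k.choose j : ℝ) * (-1) ^ j / (1 + ((q ^ n) ^ (m - j))⁻¹)

private noncomputable def Vk (q : ℝ) (n m k : ℕ) : ℝ :=
  ∑ j ∈ range n, (-1 : ℝ) ^ j * ((1 - q ^ j) / q ^ j) ^ (m - k)

private lemma hVm {q : ℝ} (m : ℕ) {n : ℕ} (hn : Odd n) : Vk q n m m = 1 := by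
  simp only [Vk, Nat.sub_self, pow_zero, mul_one]
  exact alt_sum hn

private lemma hVk_Ico (q : ℝ) {m n k : ℕ} (hk : k < m) (hn0 : 0 < n) :
    Vk q n m k = ∑ j ∈ Ico 1 n, (-1 : ℝ) ^ j * ((1 - q ^ j) / q ^ j) ^ (m - k) := by
  simp only [Vk]
  rw [range_eq_Ico, sum_eq_sum_Ico_succ_bot hn0]
  simp [zero_pow (show m - k ≠ 0 by omega)]

private lemma key2 {q : ℝ} (hq0 : 0 < q) (m : ℕ) {n : ℕ} (hn : Odd n) :
    Sm q m - Tk q n m m = ∑ k ∈ range m, (m.choose k : ℝ) * Tk q n m k * Vk q n m k := by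
  have hcore : ∑ k ∈ range (m + 1), (m.choose k : ℝ) * Tk q n m k * Vk q n m k = Sm q m := by
    simp only [Sm, Tk, Vk]
    exact core q hq0 m hn
  rw [sum_range_succ, hVm m hn, Nat.choose_self] at hcore
  push_cast at hcore
  linarith [hcore]

/-- Multiplication theorem: for `0 < q < 1`, `m ≥ 1` and odd positive `n`,
`E_{m,q} − ([2]_q/[2]_{q^n}) [n]_q^m E_{m,q^n}
  = ([2]_q/[2]_{q^n}) Σ_{k=0}^{m-1} C(m,k) [n]_q^k E_{k,q^n}^{(-m)}
      Σ_{j=1}^{n-1} q^{-(m-k)j} (-1)^j [j]_q^{m-k}`,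
where `E_{k,Q}^{(-m)} = [2]_Q (1-Q)^{-k} Σ_{j=0}^k C(k,j)(-1)^j/(1+Q^{j-m})`
(with `Q^{j-m}` the real power) and `E_{m,q} = E_{m,q}^{(-m)}`. -/
theorem q_euler_multiplication (q : ℝ) (hq0 : 0 < q) (hq1 : q < 1)
    (m n : ℕ) (hm : 1 ≤ m) (hn : Odd n) (hn1 : 1 ≤ n) :
    ((1 + q) / (1 - q) ^ m *
        ∑ j ∈ Finset.range (m + 1), (m.choose j : ℝ) * (-1) ^ j /
          (1 + q ^ ((j : ℝ) - (m : ℝ))))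
      - (1 + q) / (1 + q ^ n) * ((1 - q ^ n) / (1 - q)) ^ m *
        ((1 + q ^ n) / (1 - q ^ n) ^ m *
          ∑ j ∈ Finset.range (m + 1), (m.choose j : ℝ) * (-1) ^ j /
            (1 + (q ^ n) ^ ((j : ℝ) - (m : ℝ))))
    = (1 + q) / (1 + q ^ n) *
        ∑ k ∈ Finset.range m, (m.choose k : ℝ) * ((1 - q ^ n) / (1 - q)) ^ k *
          ((1 + q ^ n) / (1 - q ^ n) ^ k *
            ∑ j ∈ Finset.range (k + 1), (k.choose j : ℝ) * (-1) ^ j /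
              (1 + (q ^ n) ^ ((j : ℝ) - (m : ℝ)))) *
          ∑ j ∈ Finset.Ico 1 n, q ^ (-(((m - k) * j : ℕ) : ℤ)) * (-1 : ℝ) ^ j *
            ((1 - q ^ j) / (1 - q)) ^ (m - k) := by
  have hn0 : 0 < n := hn1
  have hQ0 : (0:ℝ) < q ^ n := pow_pos hq0 n
  have hQ1 : q ^ n < 1 := pow_lt_one₀ hq0.le hq1 (by omega)
  have h1q : (0:ℝ) < 1 - q := by linarith
  have h1Q : (0:ℝ) < 1 - q ^ n := by linarith
  have h1pQ : (0:ℝ) < 1 + q ^ n := by linarith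
  have hSr : (∑ j ∈ Finset.range (m + 1), (m.choose j : ℝ) * (-1) ^ j /
      (1 + q ^ ((j : ℝ) - (m : ℝ)))) = Sm q m := by
    simp only [Sm]
    refine sum_congr rfl fun j hj => ?_
    rw [rpow_sub_nat hq0 (Nat.lt_succ_iff.mp (mem_range.mp hj))]
  have hTr : (∑ j ∈ Finset.range (m + 1), (m.choose j : ℝ) * (-1) ^ j /
      (1 + (q ^ n) ^ ((j : ℝ) - (m : ℝ)))) = Tk q n m m := by
    simp only [Tk]
    refine sum_congr rfl fun j hj => ?_
    rw [rpow_sub_nat hQ0 (Nat.lt_succ_iff.mp (mem_range.mp hj))]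
  have hRk : ∀ k ∈ range m,
      (1 + q) / (1 + q ^ n) * ((m.choose k : ℝ) * ((1 - q ^ n) / (1 - q)) ^ k *
        ((1 + q ^ n) / (1 - q ^ n) ^ k *
          ∑ j ∈ Finset.range (k + 1), (k.choose j : ℝ) * (-1) ^ j /
            (1 + (q ^ n) ^ ((j : ℝ) - (m : ℝ)))) *
        ∑ j ∈ Finset.Ico 1 n, q ^ (-(((m - k) * j : ℕ) : ℤ)) * (-1 : ℝ) ^ j *
          ((1 - q ^ j) / (1 - q)) ^ (m - k))
      = (1 + q) / (1 - q) ^ m * ((m.choose k : ℝ) * Tk q n m k * Vk q n m k) := by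
    intro k hk
    have hkm : k < m := mem_range.mp hk
    have hTkr : (∑ j ∈ Finset.range (k + 1), (k.choose j : ℝ) * (-1) ^ j /
        (1 + (q ^ n) ^ ((j : ℝ) - (m : ℝ)))) = Tk q n m k := by
      simp only [Tk]
      refine sum_congr rfl fun j hj => ?_
      rw [rpow_sub_nat hQ0 (by have := mem_range.mp hj; omega : j ≤ m)]
    have hU : (∑ j ∈ Finset.Ico 1 n, q ^ (-(((m - k) * j : ℕ) : ℤ)) * (-1 : ℝ) ^ j *
        ((1 - q ^ j) / (1 - q)) ^ (m - k))
        = Vk q n m k * ((1 - q) ^ (m - k))⁻¹ := by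
      rw [hVk_Ico q hkm hn0, sum_mul]
      refine sum_congr rfl fun j _ => ?_
      have hqj : (q : ℝ) ^ j ≠ 0 := (pow_pos hq0 j).ne'
      have h1 : (q : ℝ) ^ (-(((m - k) * j : ℕ) : ℤ)) = ((q ^ j) ^ (m - k))⁻¹ := by
        rw [zpow_neg, zpow_natCast, pow_mul']
      rw [h1, div_pow, div_pow]
      field_simp
    rw [hTkr, hU]
    have hsplit : ((1 - q) : ℝ) ^ m = (1 - q) ^ k * (1 - q) ^ (m - k) := by
      rw [← pow_add]
      congr 1
      omega
    rw [hsplit, div_pow]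
    field_simp
  rw [hSr, hTr]
  conv_rhs => rw [mul_sum]
  rw [sum_congr rfl hRk, ← mul_sum, ← key2 hq0 m hn]
  rw [div_pow]
  field_simp
end

section
/- For the ordinary Euler numbers E_m defined by 2/(e^t+1) = Σ E_m t^m/m!, and any odd positive integer n and m ≥ 1: (1 − n^m) E_m = Σ_{k=0}^{m-1} binom(m,k) n^k E_k Σ_{j=1}^{n-1} (-1)^j j^{m-k}. -/
open Finset

lemma aux_coeff_zero (d : ℕ → ℝ) (ρ : NNReal) (hρ : 0 < ρ)
    (h : ∀ t : ℝ, |t| < ρ → HasSum (fun m => d m * t ^ m) 0) : ∀ m, d m = 0 := by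
  have h2 : (0:ℝ) < (ρ:ℝ)/2 := by positivity
  have hρ2 : ((ρ/2 : NNReal) : ℝ) = (ρ:ℝ)/2 := by push_cast; ring
  have hsum : Summable fun m => ‖FormalMultilinearSeries.ofScalars ℝ d m‖ * ((ρ/2 : NNReal):ℝ) ^ m := by
    have hs := (h ((ρ:ℝ)/2) (by rw [abs_of_pos h2]; linarith)).summable
    have hs2 := summable_abs_iff.2 hs
    refine hs2.congr fun m => ?_
    rw [FormalMultilinearSeries.ofScalars_norm, hρ2, abs_mul, abs_pow,
      abs_of_pos h2, Real.norm_eq_abs]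
  have hball : HasFPowerSeriesOnBall (fun _ : ℝ => (0:ℝ))
      (FormalMultilinearSeries.ofScalars ℝ d) 0 ((ρ/2 : NNReal) : ENNReal) := by
    refine ⟨(FormalMultilinearSeries.ofScalars ℝ d).le_radius_of_summable_norm hsum, ?_, ?_⟩
    · exact_mod_cast half_pos hρ
    · intro y hy
      rw [mem_emetric_ball_zero_iff, enorm_eq_nnnorm, ENNReal.coe_lt_coe] at hy
      have hy' : |y| < (ρ:ℝ) := by
        have : ‖y‖ < ((ρ/2 : NNReal):ℝ) := hy
        rw [hρ2, Real.norm_eq_abs] at this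
        linarith
      have hres := h y hy'
      refine hres.congr_fun fun m => ?_
      rw [FormalMultilinearSeries.ofScalars_apply_eq, smul_eq_mul]
  have heq := hball.hasFPowerSeriesAt.eq_formalMultilinearSeries
    (hasFPowerSeriesAt_const (c := (0:ℝ)) (e := (0:ℝ)))
  rw [constFormalMultilinearSeries_zero] at heq
  intro m
  exact congrFun ((FormalMultilinearSeries.ofScalars_series_eq_zero (E := ℝ)).mp heq) m

lemma aux_geom (n : ℕ) (hn : Odd n) (t : ℝ) :
    (Real.exp t + 1) * ∑ j ∈ range n, (-1:ℝ)^j * Real.exp ((j:ℝ)*t)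
      = Real.exp ((n:ℝ)*t) + 1 := by
  have hx : ∀ j : ℕ, Real.exp ((j:ℝ)*t) = (Real.exp t) ^ j := fun j => Real.exp_nat_mul t j
  simp only [hx]
  set x := Real.exp t
  have h := geom_sum_mul (-x) n
  simp only [neg_pow x, hn.neg_pow] at h
  linear_combination -h

lemma aux_expsum (n : ℕ) (t : ℝ) :
    HasSum (fun r : ℕ => (∑ j ∈ range n, (-1:ℝ)^j * (j:ℝ)^r) / r.factorial * t^r)
      (∑ j ∈ range n, (-1:ℝ)^j * Real.exp ((j:ℝ)*t)) := by
  have hj : ∀ j ∈ range n, HasSum (fun r : ℕ => (-1:ℝ)^j * (((j:ℝ)*t)^r / r.factorial))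
      ((-1:ℝ)^j * Real.exp ((j:ℝ)*t)) := by
    intro j _
    have h := (NormedSpace.expSeries_div_hasSum_exp ((j:ℝ)*t)).mul_left ((-1:ℝ)^j)
    rwa [← Real.exp_eq_exp_ℝ] at h
  have h := hasSum_sum hj
  refine h.congr_fun fun r => ?_
  rw [sum_div, sum_mul]
  refine Finset.sum_congr rfl fun j _ => ?_
  rw [mul_pow]
  ring

lemma aux_key (E : ℕ → ℝ)
    (hE : ∀ t : ℝ, |t| < 1 →
      HasSum (fun k : ℕ => E k * t ^ k / (k.factorial : ℝ)) (2 / (Real.exp t + 1)))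
    (n : ℕ) (hn : Odd n) (hn1 : 1 ≤ n) (M : ℕ) :
    E M / M.factorial = ∑ k ∈ range (M+1),
      (E k * (n:ℝ)^k / k.factorial) *
        ((∑ j ∈ range n, (-1:ℝ)^j * (j:ℝ)^(M-k)) / (M-k).factorial : ℝ) := by
  have hnpos : (0:ℝ) < n := by exact_mod_cast hn1
  have hρpos : (0:NNReal) < ((n:NNReal)+1)⁻¹ := by positivity
  have hzero := aux_coeff_zero
    (fun M => E M / M.factorial - ∑ k ∈ range (M+1),
      (E k * (n:ℝ)^k / k.factorial) *
        ((∑ j ∈ range n, (-1:ℝ)^j * (j:ℝ)^(M-k)) / (M-k).factorial : ℝ))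
    ((n:NNReal)+1)⁻¹ hρpos ?_
  · have := hzero M
    linarith
  · intro t ht
    have hρ : ((((n:NNReal)+1)⁻¹ : NNReal):ℝ) = ((n:ℝ)+1)⁻¹ := by push_cast; ring
    rw [hρ] at ht
    have habs : 0 ≤ |t| := abs_nonneg t
    have hfrac : (n:ℝ) * ((n:ℝ)+1)⁻¹ < 1 := by
      rw [← div_eq_mul_inv]
      exact (div_lt_one (by positivity)).mpr (by linarith)
    have ht1 : |t| < 1 := lt_of_lt_of_le ht (by
      rw [inv_le_one_iff₀]; right; linarith)
    have htn : |(n:ℝ)*t| < 1 := by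
      rw [abs_mul, abs_of_pos hnpos]
      calc (n:ℝ) * |t| < (n:ℝ) * ((n:ℝ)+1)⁻¹ := by
            exact mul_lt_mul_of_pos_left ht hnpos
        _ < 1 := hfrac
    -- the three HasSums
    have h1 : HasSum (fun k : ℕ => (E k / k.factorial) * t^k) (2/(Real.exp t + 1)) := by
      refine (hE t ht1).congr_fun fun k => ?_
      ring
    have hA : HasSum (fun k : ℕ => (E k * (n:ℝ)^k / k.factorial) * t^k)
        (2/(Real.exp ((n:ℝ)*t) + 1)) := by
      refine (hE ((n:ℝ)*t) htn).congr_fun fun k => ?_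
      rw [mul_pow]; ring
    have hG := aux_expsum n t
    have haN : Summable fun k => ‖(E k * (n:ℝ)^k / k.factorial) * t^k‖ := by
      exact (summable_abs_iff.2 hA.summable).congr fun k => (Real.norm_eq_abs _).symm
    have hbN : Summable fun r =>
        ‖(∑ j ∈ range n, (-1:ℝ)^j * (j:ℝ)^r) / r.factorial * t^r‖ := by
      exact (summable_abs_iff.2 hG.summable).congr fun k => (Real.norm_eq_abs _).symm
    have hmul := hasSum_sum_range_mul_of_summable_norm haN hbN
    rw [hA.tsum_eq, hG.tsum_eq] at hmul
    have hval : 2/(Real.exp ((n:ℝ)*t) + 1) * (∑ j ∈ range n, (-1:ℝ)^j * Real.exp ((j:ℝ)*t))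
        = 2/(Real.exp t + 1) := by
      have hgeom := aux_geom n hn t
      have hd1 : Real.exp t + 1 ≠ 0 := by positivity
      have hd2 : Real.exp ((n:ℝ)*t) + 1 ≠ 0 := by positivity
      rw [div_mul_eq_mul_div, div_eq_div_iff hd2 hd1]
      linear_combination 2 * hgeom
    rw [hval] at hmul
    have hmul' : HasSum (fun m => (∑ k ∈ range (m+1),
        (E k * (n:ℝ)^k / k.factorial) *
          ((∑ j ∈ range n, (-1:ℝ)^j * (j:ℝ)^(m-k)) / (m-k).factorial : ℝ)) * t^m)
        (2/(Real.exp t + 1)) := by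
      refine hmul.congr_fun fun m => ?_
      rw [sum_mul]
      refine Finset.sum_congr rfl fun k hk => ?_
      have hk' : k ≤ m := Nat.lt_succ_iff.mp (mem_range.mp hk)
      rw [show (E k * (n:ℝ)^k / k.factorial) *
          ((∑ j ∈ range n, (-1:ℝ)^j * (j:ℝ)^(m-k)) / (m-k).factorial : ℝ) * t^m
        = (E k * (n:ℝ)^k / k.factorial) *
          ((∑ j ∈ range n, (-1:ℝ)^j * (j:ℝ)^(m-k)) / (m-k).factorial : ℝ) * (t^k * t^(m-k))
        from by rw [← pow_add, Nat.add_sub_cancel' hk']]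
      ring
    have hsub := h1.sub hmul'
    rw [sub_self] at hsub
    refine hsub.congr_fun fun m => ?_
    rw [sub_mul]

/-- For the ordinary Euler numbers `E_m` (defined by `2/(e^t+1) = Σ E_m t^m/m!`),
any odd positive integer `n` and `m ≥ 1`:
`(1 − n^m) E_m = Σ_{k=0}^{m-1} C(m,k) n^k E_k Σ_{j=1}^{n-1} (-1)^j j^{m-k}`. -/
theorem euler_number_multiplication (E : ℕ → ℝ)
    (hE : ∀ t : ℝ, |t| < 1 →
      HasSum (fun k : ℕ => E k * t ^ k / (k.factorial : ℝ)) (2 / (Real.exp t + 1)))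
    (n m : ℕ) (hn : Odd n) (hn1 : 1 ≤ n) (hm : 1 ≤ m) :
    (1 - (n : ℝ) ^ m) * E m =
      ∑ k ∈ Finset.range m, (m.choose k : ℝ) * (n : ℝ) ^ k * E k *
        ∑ j ∈ Finset.Ico 1 n, (-1 : ℝ) ^ j * (j : ℝ) ^ (m - k) := by
  have key := aux_key E hE n hn hn1 m
  have hmf : (m.factorial : ℝ) ≠ 0 := Nat.cast_ne_zero.2 m.factorial_ne_zero
  have key2 : E m = ∑ k ∈ range (m+1), (m.choose k : ℝ) * (n:ℝ)^k * E k *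
      (∑ j ∈ range n, (-1:ℝ)^j * (j:ℝ)^(m-k)) := by
    calc E m = E m / m.factorial * m.factorial := by field_simp
      _ = (∑ k ∈ range (m+1),
            (E k * (n:ℝ)^k / k.factorial) *
              ((∑ j ∈ range n, (-1:ℝ)^j * (j:ℝ)^(m-k)) / (m-k).factorial : ℝ)) * m.factorial := by
          rw [key]
      _ = _ := by
          rw [sum_mul]
          refine Finset.sum_congr rfl fun k hk => ?_
          have hk' : k ≤ m := Nat.lt_succ_iff.mp (mem_range.mp hk)
          rw [Nat.cast_choose ℝ hk']
          have h1 : (k.factorial : ℝ) ≠ 0 := Nat.cast_ne_zero.2 k.factorial_ne_zero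
          have h2 : ((m-k).factorial : ℝ) ≠ 0 := Nat.cast_ne_zero.2 (m-k).factorial_ne_zero
          field_simp
  rw [sum_range_succ, Nat.choose_self, Nat.cast_one] at key2
  have hg0 : (∑ j ∈ range n, (-1:ℝ)^j * (j:ℝ)^(m-m)) = 1 := by
    simp only [Nat.sub_self, pow_zero, mul_one, neg_one_geom_sum,
      if_neg (Nat.not_even_iff_odd.mpr hn)]
  rw [hg0] at key2
  have hsum : ∀ k ∈ range m, (m.choose k : ℝ) * (n:ℝ)^k * E k *
      (∑ j ∈ range n, (-1:ℝ)^j * (j:ℝ)^(m-k))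
      = (m.choose k : ℝ) * (n:ℝ)^k * E k *
      (∑ j ∈ Finset.Ico 1 n, (-1:ℝ)^j * (j:ℝ)^(m-k)) := by
    intro k hk
    have hk' : k < m := mem_range.mp hk
    congr 1
    rw [range_eq_Ico, Finset.sum_eq_sum_Ico_succ_bot (by omega : 0 < n)]
    rw [Nat.cast_zero, zero_pow (by omega : m - k ≠ 0)]
    ring
  rw [Finset.sum_congr rfl hsum] at key2
  linear_combination key2
end

section
/- For 0 < q < 1, an odd positive integer d, a function χ : ℤ → ℂ periodic with period d, and s ∈ ℂ with Re(s) > 1: [2]_q Σ_{n=1}^∞ χ(n)(-1)^n q^{sn}/[n]_q^s = ([2]_q/[2]_{q^d}) [d]_q^{-s} Σ_{a=1}^{d} χ(a)(-1)^a q^{sa} · ζ_{q^d,E}(s, a/d), where ζ_{Q,E}(s,x) = [2]_Q Σ_{n=0}^∞ (-1)^n Q^{sn}/[n+x]_Q^s. -/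
open Finset

private lemma neg_one_pow_mul_odd (d k : ℕ) (hd : Odd d) : ((-1 : ℂ)) ^ (k * d) = (-1) ^ k := by
  rw [pow_mul]
  rcases Nat.even_or_odd k with hk | hk
  · rw [hk.neg_one_pow, one_pow]
  · rw [hk.neg_one_pow, hd.neg_one_pow]

private lemma sum_Icc_eq_range {M : Type*} [AddCommMonoid M] (F : ℕ → M) (d : ℕ) :
    ∑ i ∈ Finset.Icc 1 d, F i = ∑ i ∈ Finset.range d, F (i + 1) := by
  rw [← Finset.Ico_add_one_right_eq_Icc, Finset.sum_Ico_eq_sum_range]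
  simp [add_comm]

private lemma qfact_one_le {q : ℝ} (hq0 : 0 < q) (hq1 : q < 1) {m : ℕ} (hm : 1 ≤ m) :
    1 ≤ (1 - q ^ m) / (1 - q) := by
  have h1 : 0 < 1 - q := by linarith
  rw [le_div_iff₀ h1]
  have h2 : q ^ m ≤ q := by
    calc q ^ m ≤ q ^ 1 := pow_le_pow_of_le_one hq0.le hq1.le hm
    _ = q := pow_one q
  linarith

private lemma rpow_aux {q : ℝ} (hq0 : 0 < q) {d : ℕ} (hd : 1 ≤ d) (k a : ℕ) :
    (q ^ d : ℝ) ^ ((k : ℝ) + (a : ℝ) / (d : ℝ)) = q ^ (k * d + a) := by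
  have hd0 : (d : ℝ) ≠ 0 := by positivity
  rw [← Real.rpow_natCast q d, ← Real.rpow_mul hq0.le]
  have he : (d : ℝ) * ((k : ℝ) + (a : ℝ) / (d : ℝ)) = ((k * d + a : ℕ) : ℝ) := by
    push_cast; field_simp
  rw [he, Real.rpow_natCast]

/-- For `0 < q < 1`, odd positive `d`, a `d`-periodic `χ : ℤ → ℂ` and `Re s > 1`:
`[2]_q Σ_{n=1}^∞ χ(n)(-1)^n q^{sn}/[n]_q^s
  = ([2]_q/[2]_{q^d}) [d]_q^{-s} Σ_{a=1}^d χ(a)(-1)^a q^{sa} ζ_{q^d,E}(s, a/d)`,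
with complex powers of positive reals given by `exp(s·log(·))`. -/
theorem q_euler_L_series (q : ℝ) (hq0 : 0 < q) (hq1 : q < 1)
    (d : ℕ) (hd : Odd d) (hd1 : 1 ≤ d)
    (χ : ℤ → ℂ) (hχ : ∀ n : ℤ, χ (n + (d : ℤ)) = χ n)
    (s : ℂ) (hs : 1 < s.re) :
    ((1 + q : ℝ) : ℂ) * ∑' n : ℕ, χ ((n : ℤ) + 1) * (-1) ^ (n + 1) *
        Complex.exp (s * ((n : ℂ) + 1) * (Real.log q : ℂ)) /
        Complex.exp (s * (Real.log ((1 - q ^ (n + 1)) / (1 - q)) : ℂ))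
      = (((1 + q) / (1 + q ^ d) : ℝ) : ℂ) *
        Complex.exp (-s * (Real.log ((1 - q ^ d) / (1 - q)) : ℂ)) *
        ∑ a ∈ Finset.Icc 1 d, χ (a : ℤ) * (-1) ^ a *
          Complex.exp (s * (a : ℂ) * (Real.log q : ℂ)) *
          (((1 + q ^ d : ℝ) : ℂ) * ∑' n : ℕ, (-1) ^ n *
            Complex.exp (s * (n : ℂ) * (Real.log (q ^ d) : ℂ)) /
            Complex.exp (s * (Real.log
              ((1 - (q ^ d) ^ ((n : ℝ) + (a : ℝ) / (d : ℝ))) / (1 - q ^ d)) : ℂ))) := by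
  haveI : NeZero d := ⟨by omega⟩
  have hq' : (0:ℝ) < 1 - q := by linarith
  have hqd0 : 0 < q ^ d := pow_pos hq0 d
  have hqd1 : q ^ d < 1 := pow_lt_one₀ hq0.le hq1 (by omega)
  have hqd' : (0:ℝ) < 1 - q ^ d := by linarith
  set L : ℝ := Real.log ((1 - q ^ d) / (1 - q)) with hL
  set f : ℕ → ℂ := fun n => χ ((n : ℤ) + 1) * (-1) ^ (n + 1) *
        Complex.exp (s * ((n : ℂ) + 1) * (Real.log q : ℂ)) /
        Complex.exp (s * (Real.log ((1 - q ^ (n + 1)) / (1 - q)) : ℂ)) with hf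
  -- periodicity in natural multiples
  have hper : ∀ (x : ℤ) (k : ℕ), χ (x + d * k) = χ x := by
    intro x k
    induction k with
    | zero => simp
    | succ k ih =>
        have h2 := hχ (x + d * k)
        have h3 : x + (d:ℤ) * ((k:ℤ) + 1) = (x + d * k) + d := by ring
        push_cast
        rw [h3, h2, ih]
  -- bound on χ
  set C : ℝ := ∑ a ∈ Finset.range d, ‖χ ((a:ℤ) + 1)‖ with hC
  have hχb : ∀ m : ℕ, ‖χ ((m:ℤ) + 1)‖ ≤ C := by
    intro m
    have hm : (m:ℤ) = (d:ℤ) * ((m / d : ℕ) : ℤ) + ((m % d : ℕ) : ℤ) := by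
      exact_mod_cast (Nat.div_add_mod m d).symm
    have h1 : (m:ℤ) + 1 = ((m % d : ℕ) : ℤ) + 1 + (d:ℤ) * ((m / d : ℕ) : ℤ) := by
      linarith [hm]
    rw [h1, hper]
    exact Finset.single_le_sum (f := fun a : ℕ => ‖χ ((a:ℤ) + 1)‖)
      (fun i _ => norm_nonneg _) (Finset.mem_range.mpr (Nat.mod_lt m (by omega)))
  have hC0 : 0 ≤ C := le_trans (norm_nonneg _) (hχb 0)
  -- summability of f
  set r : ℝ := Real.exp (s.re * Real.log q) with hr
  have hr0 : 0 < r := Real.exp_pos _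
  have hr1 : r < 1 := by
    have hlq : Real.log q < 0 := Real.log_neg hq0 hq1
    have : s.re * Real.log q < 0 := mul_neg_of_pos_of_neg (by linarith) hlq
    calc r < Real.exp 0 := Real.exp_lt_exp.mpr this
    _ = 1 := Real.exp_zero
  have hre : ∀ y : ℝ, (s * (y:ℂ)).re = s.re * y := by
    intro y; simp [Complex.mul_re]
  have hfnorm : ∀ n : ℕ, ‖f n‖ ≤ (C * r) * r ^ n := by
    intro n
    have e1 : s * ((n : ℂ) + 1) * (Real.log q : ℂ) = s * ((((n:ℝ) + 1) * Real.log q : ℝ) : ℂ) := by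
      push_cast; ring
    have e2 : ‖Complex.exp (s * ((n : ℂ) + 1) * (Real.log q : ℂ))‖ = r ^ (n + 1) := by
      rw [e1, Complex.norm_exp, hre]
      rw [show s.re * (((n:ℝ) + 1) * Real.log q) = ((n + 1 : ℕ) : ℝ) * (s.re * Real.log q) by
        push_cast; ring]
      rw [Real.exp_nat_mul]
    have e3 : (1:ℝ) ≤ ‖Complex.exp (s * (Real.log ((1 - q ^ (n + 1)) / (1 - q)) : ℂ))‖ := by
      rw [Complex.norm_exp, hre]
      apply Real.one_le_exp
      have := qfact_one_le hq0 hq1 (Nat.le_add_left 1 n)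
      have hlog : 0 ≤ Real.log ((1 - q ^ (n + 1)) / (1 - q)) := Real.log_nonneg this
      nlinarith
    have e4 : ‖f n‖ = ‖χ ((n:ℤ) + 1)‖ * r ^ (n + 1) /
        ‖Complex.exp (s * (Real.log ((1 - q ^ (n + 1)) / (1 - q)) : ℂ))‖ := by
      rw [hf]
      simp only [norm_div, norm_mul, norm_pow, norm_neg, norm_one, one_pow, mul_one, e2]
    rw [e4]
    calc ‖χ ((n:ℤ) + 1)‖ * r ^ (n + 1) /
        ‖Complex.exp (s * (Real.log ((1 - q ^ (n + 1)) / (1 - q)) : ℂ))‖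
        ≤ ‖χ ((n:ℤ) + 1)‖ * r ^ (n + 1) := by
          apply div_le_self (by positivity) e3
    _ ≤ C * r ^ (n + 1) := by
          apply mul_le_mul_of_nonneg_right (hχb n) (by positivity)
    _ = (C * r) * r ^ n := by ring
  have hsumf : Summable f :=
    Summable.of_norm_bounded ((summable_geometric_of_lt_one hr0.le hr1).mul_left (C * r)) hfnorm
  -- reindexing of the LHS sum
  have hsumG : Summable (fun c : Fin d × ℕ => f (c.2 * d + (c.1 : ℕ))) :=
    hsumf.comp_injective
      ((Nat.divModEquiv d).symm.injective.comp (Equiv.prodComm (Fin d) ℕ).injective)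
  have step1 : ∑' n : ℕ, f n = ∑ i ∈ Finset.range d, ∑' k : ℕ, f (k * d + i) := by
    have e1 : ∑' (p : ℕ × Fin d), f (p.1 * d + (p.2 : ℕ)) = ∑' n, f n := by
      simpa using ((Nat.divModEquiv d).symm.tsum_eq f)
    have e2 : ∑' (c : Fin d × ℕ), f (c.2 * d + (c.1 : ℕ))
        = ∑' (p : ℕ × Fin d), f (p.1 * d + (p.2 : ℕ)) :=
      (Equiv.prodComm (Fin d) ℕ).tsum_eq (fun p : ℕ × Fin d => f (p.1 * d + (p.2 : ℕ)))
    have e3 : ∑' (c : Fin d × ℕ), f (c.2 * d + (c.1 : ℕ))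
        = ∑' (b : Fin d), ∑' (k : ℕ), f (k * d + (b : ℕ)) := by
      exact Summable.tsum_prod' hsumG (fun b => hsumG.prod_factor b)
    rw [← e1, ← e2, e3, tsum_fintype]
    exact Fin.sum_univ_eq_sum_range (fun i => ∑' k : ℕ, f (k * d + i)) d
  -- key per-residue identity
  have key : ∀ i : ℕ, i < d → ∑' k : ℕ, f (k * d + i)
      = χ ((i + 1 : ℕ) : ℤ) * (-1) ^ (i + 1) *
        Complex.exp (s * ((i + 1 : ℕ) : ℂ) * (Real.log q : ℂ)) *
        Complex.exp (-(s * (L : ℂ))) *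
        ∑' n : ℕ, (-1) ^ n * Complex.exp (s * (n : ℂ) * (Real.log (q ^ d) : ℂ)) /
          Complex.exp (s * (Real.log
            ((1 - (q ^ d) ^ ((n : ℝ) + ((i + 1 : ℕ) : ℝ) / (d : ℝ))) / (1 - q ^ d)) : ℂ)) := by
    intro i hi
    rw [← tsum_mul_left]
    apply tsum_congr
    intro k
    have hchi : χ ((↑(k * d + i) : ℤ) + 1) = χ ((i + 1 : ℕ) : ℤ) := by
      have h4 : ((k * d + i : ℕ) : ℤ) + 1 = ((i + 1 : ℕ) : ℤ) + (d : ℤ) * (k : ℤ) := by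
        push_cast; ring
      rw [h4, hper]
    have hsign : ((-1 : ℂ)) ^ (k * d + i + 1) = (-1) ^ (i + 1) * (-1) ^ k := by
      rw [show k * d + i + 1 = k * d + (i + 1) from rfl, pow_add, neg_one_pow_mul_odd d k hd]
      ring
    have hnum : s * ((↑(k * d + i) : ℂ) + 1) * (Real.log q : ℂ)
        = s * ((i + 1 : ℕ) : ℂ) * (Real.log q : ℂ) + s * (k : ℂ) * (Real.log (q ^ d) : ℂ) := by
      rw [Real.log_pow]; push_cast; ring
    have hxp : (q ^ d : ℝ) ^ ((k : ℝ) + ((i + 1 : ℕ) : ℝ) / (d : ℝ)) = q ^ (k * d + i + 1) :=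
      rpow_aux hq0 hd1 k (i + 1)
    have hqm1 : q ^ (k * d + i + 1) < 1 := pow_lt_one₀ hq0.le hq1 (by omega)
    have hden : Real.log ((1 - q ^ (k * d + i + 1)) / (1 - q))
        = L + Real.log ((1 - (q ^ d) ^ ((k : ℝ) + ((i + 1 : ℕ) : ℝ) / (d : ℝ))) / (1 - q ^ d)) := by
      rw [hxp, hL]
      have hfac : (1 - q ^ (k * d + i + 1)) / (1 - q)
          = ((1 - q ^ d) / (1 - q)) * ((1 - q ^ (k * d + i + 1)) / (1 - q ^ d)) := by
        field_simp
      rw [hfac, Real.log_mul (ne_of_gt (div_pos hqd' hq'))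
        (ne_of_gt (div_pos (by linarith) hqd'))]
    simp only [hf]
    rw [hchi, hsign, hnum, Complex.exp_add, hden, Complex.ofReal_add, mul_add, Complex.exp_add,
      Complex.exp_neg]
    have h5 := Complex.exp_ne_zero (s * (L : ℂ))
    have h6 := Complex.exp_ne_zero (s * (Real.log
      ((1 - (q ^ d) ^ ((k : ℝ) + ((i + 1 : ℕ) : ℝ) / (d : ℝ))) / (1 - q ^ d)) : ℂ))
    field_simp
  -- final assembly
  rw [step1, sum_Icc_eq_range, Finset.mul_sum, Finset.mul_sum]
  apply Finset.sum_congr rfl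
  intro i hi
  rw [key i (Finset.mem_range.mp hi), neg_mul]
  have hne : ((1 + q ^ d : ℝ) : ℂ) ≠ 0 :=
    Complex.ofReal_ne_zero.mpr (ne_of_gt (by positivity : (0:ℝ) < 1 + q ^ d))
  set T := ∑' n : ℕ, (-1 : ℂ) ^ n * Complex.exp (s * (n : ℂ) * (Real.log (q ^ d) : ℂ)) /
    Complex.exp (s * (Real.log
      ((1 - (q ^ d) ^ ((n : ℝ) + ((i + 1 : ℕ) : ℝ) / (d : ℝ))) / (1 - q ^ d)) : ℂ)) with hT
  push_cast at hne ⊢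
  field_simp
end

section
/- For 0 < q < 1, integers a, F with 0 < a < F and F odd, and s ∈ ℂ with Re(s) > 1: the partial zeta function H_{q,E}(s,a,F) := [2]_q Σ_{m > 0, m ≡ a mod F} (-1)^m q^{ms}/[m]_q^s satisfies H_{q,E}(s,a,F) = ([2]_q/[2]_{q^F}) [F]_q^{-s} (-1)^a q^{sa} ζ_{q^F,E}(s, a/F). -/
open Finset

/-- Partial zeta function: for `0 < q < 1`, integers `0 < a < F` with `F` odd
and `Re s > 1`,
`H_{q,E}(s,a,F) = [2]_q Σ_{m>0, m≡a (F)} (-1)^m q^{ms}/[m]_q^s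
  = ([2]_q/[2]_{q^F}) [F]_q^{-s} (-1)^a q^{sa} ζ_{q^F,E}(s, a/F)`. -/
theorem q_euler_partial_zeta (q : ℝ) (hq0 : 0 < q) (hq1 : q < 1)
    (a F : ℕ) (ha : 0 < a) (haF : a < F) (hF : Odd F)
    (s : ℂ) (hs : 1 < s.re) :
    ((1 + q : ℝ) : ℂ) * ∑' m : ℕ, (if 0 < m ∧ m % F = a % F then
        (-1 : ℂ) ^ m * Complex.exp (s * (m : ℂ) * (Real.log q : ℂ)) /
          Complex.exp (s * (Real.log ((1 - q ^ m) / (1 - q)) : ℂ)) else 0)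
      = (((1 + q) / (1 + q ^ F) : ℝ) : ℂ) *
        Complex.exp (-s * (Real.log ((1 - q ^ F) / (1 - q)) : ℂ)) * (-1) ^ a *
        Complex.exp (s * (a : ℂ) * (Real.log q : ℂ)) *
        (((1 + q ^ F : ℝ) : ℂ) * ∑' n : ℕ, (-1) ^ n *
          Complex.exp (s * (n : ℂ) * (Real.log (q ^ F) : ℂ)) /
          Complex.exp (s * (Real.log
            ((1 - (q ^ F) ^ ((n : ℝ) + (a : ℝ) / (F : ℝ))) / (1 - q ^ F)) : ℂ))) := by
  have hF0 : 0 < F := lt_trans ha haF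
  set f : ℕ → ℂ := fun m => if 0 < m ∧ m % F = a % F then
      (-1 : ℂ) ^ m * Complex.exp (s * (m : ℂ) * (Real.log q : ℂ)) /
        Complex.exp (s * (Real.log ((1 - q ^ m) / (1 - q)) : ℂ)) else 0 with hfdef
  set g : ℕ → ℂ := fun n => (-1 : ℂ) ^ n *
      Complex.exp (s * (n : ℂ) * (Real.log (q ^ F) : ℂ)) /
      Complex.exp (s * (Real.log
        ((1 - (q ^ F) ^ ((n : ℝ) + (a : ℝ) / (F : ℝ))) / (1 - q ^ F)) : ℂ)) with hgdef
  set c : ℂ := (-1 : ℂ) ^ a * Complex.exp (s * (a : ℂ) * (Real.log q : ℂ)) *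
      Complex.exp (-s * (Real.log ((1 - q ^ F) / (1 - q)) : ℂ)) with hcdef
  have hinj : Function.Injective (fun n : ℕ => a + n * F) := by
    intro m n h
    simp only at h
    exact Nat.eq_of_mul_eq_mul_right hF0 (by omega)
  have hsupp : Function.support f ⊆ Set.range (fun n : ℕ => a + n * F) := by
    intro m hm
    rw [Function.mem_support, hfdef] at hm
    by_cases h : 0 < m ∧ m % F = a % F
    · obtain ⟨h1, h2⟩ := h
      rw [Nat.mod_eq_of_lt haF] at h2
      have hdm := Nat.div_add_mod m F
      rw [Nat.mul_comm] at hdm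
      exact ⟨m / F, by show a + m / F * F = m; omega⟩
    · simp [h] at hm
  -- positivity facts
  have hq1' : ∀ k : ℕ, 0 < k → 0 < 1 - q ^ k := fun k hk =>
    sub_pos.mpr (pow_lt_one₀ hq0.le hq1 hk.ne')
  have hA : 0 < (1 - q ^ F) / (1 - q) := div_pos (hq1' F hF0) (by linarith)
  -- rpow computation
  have hrpow : ∀ n : ℕ, (q ^ F : ℝ) ^ ((n : ℝ) + (a : ℝ) / (F : ℝ)) = q ^ (a + n * F) := by
    intro n
    rw [← Real.rpow_natCast q F, ← Real.rpow_natCast q (a + n * F),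
      ← Real.rpow_mul hq0.le]
    congr 1
    have : (F : ℝ) ≠ 0 := Nat.cast_ne_zero.mpr hF0.ne'
    field_simp
    push_cast
    ring
  have hlog : ∀ n : ℕ, (Real.log ((1 - q ^ (a + n * F)) / (1 - q)) : ℝ) =
      Real.log ((1 - q ^ F) / (1 - q)) +
      Real.log ((1 - (q ^ F) ^ ((n : ℝ) + (a : ℝ) / (F : ℝ))) / (1 - q ^ F)) := by
    intro n
    rw [hrpow n, ← Real.log_mul (ne_of_gt hA)
      (ne_of_gt (div_pos (hq1' (a + n * F) (by omega)) (hq1' F hF0)))]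
    congr 1
    rw [div_mul_div_comm, mul_comm (1 - q) (1 - q ^ F),
      mul_div_mul_left _ _ (ne_of_gt (hq1' F hF0))]
  have hterm : ∀ n : ℕ, f (a + n * F) = c * g n := by
    intro n
    have hcond : 0 < a + n * F ∧ (a + n * F) % F = a % F := ⟨by omega, by simp⟩
    simp only [hfdef]
    rw [if_pos hcond, hgdef, hcdef]
    have hpow : (-1 : ℂ) ^ (a + n * F) = (-1 : ℂ) ^ a * (-1 : ℂ) ^ n := by
      rw [pow_add, mul_comm n F, pow_mul, hF.neg_one_pow]
    have hexp1 : Complex.exp (s * ((a + n * F : ℕ) : ℂ) * (Real.log q : ℂ)) =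
        Complex.exp (s * (a : ℂ) * (Real.log q : ℂ)) *
        Complex.exp (s * (n : ℂ) * (Real.log (q ^ F) : ℂ)) := by
      rw [← Complex.exp_add]
      congr 1
      rw [Real.log_pow]
      push_cast
      ring
    have hexp2 : Complex.exp (s * (Real.log ((1 - q ^ (a + n * F)) / (1 - q)) : ℂ)) =
        Complex.exp (s * (Real.log ((1 - q ^ F) / (1 - q)) : ℂ)) *
        Complex.exp (s * (Real.log
          ((1 - (q ^ F) ^ ((n : ℝ) + (a : ℝ) / (F : ℝ))) / (1 - q ^ F)) : ℂ)) := by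
      rw [← Complex.exp_add]
      congr 1
      rw [hlog n]
      push_cast
      ring
    rw [hpow, hexp1, hexp2, neg_mul, Complex.exp_neg]
    have hne : Complex.exp (s * (Real.log ((1 - q ^ F) / (1 - q)) : ℂ)) ≠ 0 :=
      Complex.exp_ne_zero _
    field_simp
  have hsum : ∑' m : ℕ, f m = c * ∑' n : ℕ, g n := by
    rw [← hinj.tsum_eq hsupp]
    simp only [hterm]
    exact tsum_mul_left
  rw [hsum, hcdef]
  have hqF : (1 : ℝ) + q ^ F ≠ 0 := by positivity
  have hc1 : (((1 + q) / (1 + q ^ F) : ℝ) : ℂ) * ((1 + q ^ F : ℝ) : ℂ) = ((1 + q : ℝ) : ℂ) := by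
    rw [← Complex.ofReal_mul]
    congr 1
    field_simp
  rw [← hc1]
  ring
end

section
/- For 0 < q < 1 and m ≥ 1, as q → 1⁻ the q-Euler number E_{m,q} := [2]_q (1-q)^{-m} Σ_{j=0}^m binom(m,j)(-1)^j/(1+q^{j-m}) tends to the ordinary Euler number E_m (defined by 2/(e^t+1) = Σ E_m t^m/m!). -/
open Filter Topology Finset

private noncomputable def cc (m k : ℕ) : ℝ :=
  ∑ i ∈ range (m+1), (m.choose i : ℝ) * (-1)^i * (i:ℝ)^k

private lemma cc_rec (m k : ℕ) :
    cc (m+1) (k+1) = -((m:ℝ)+1) * ∑ j ∈ range (m+1),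
      (m.choose j : ℝ) * (-1)^j * ((j:ℝ)+1)^k := by
  rw [cc, Finset.sum_range_succ']
  simp only [Nat.cast_zero, zero_pow (Nat.succ_ne_zero k), mul_zero, add_zero]
  rw [Finset.mul_sum]
  refine Finset.sum_congr rfl fun i hi => ?_
  have h1 : ((m+1).choose (i+1) : ℝ) * ((i:ℝ)+1) = ((m:ℝ)+1) * (m.choose i : ℝ) := by
    have h := Nat.add_one_mul_choose_eq m i
    have h2 : (m + 1).choose (i + 1) * (i + 1) = (m + 1) * m.choose i := by
      simpa [Nat.succ_eq_add_one, mul_comm] using h.symm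
    exact_mod_cast congrArg (fun n : ℕ => (n : ℝ)) h2
  push_cast
  rw [pow_succ (-1 : ℝ) i, pow_succ ((i:ℝ)+1) k]
  linear_combination (-((-1:ℝ)^i * ((i:ℝ)+1)^k)) * h1

private lemma key_expand (m k : ℕ) :
    ∑ j ∈ range (m+1), (m.choose j : ℝ) * (-1)^j * ((j:ℝ)+1)^k
      = ∑ l ∈ range (k+1), (k.choose l : ℝ) * cc m l := by
  have expand : ∀ j : ℕ, ((j:ℝ)+1)^k = ∑ l ∈ range (k+1), (j:ℝ)^l * (k.choose l : ℝ) := by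
    intro j; simpa using add_pow (j:ℝ) 1 k
  simp_rw [expand, Finset.mul_sum]
  rw [Finset.sum_comm]
  refine Finset.sum_congr rfl fun l _ => ?_
  rw [cc, Finset.mul_sum]
  exact Finset.sum_congr rfl fun j _ => by ring

private lemma cc_spec (m : ℕ) :
    (∀ k, k < m → cc m k = 0) ∧ cc m m = (-1 : ℝ)^m * m.factorial := by
  induction m with
  | zero =>
    refine ⟨fun k hk => absurd hk (by omega), by simp [cc]⟩
  | succ m ih =>
    have hzero : ∀ k, k < m + 1 → cc (m+1) k = 0 := by
      intro k hk
      match k with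
      | 0 =>
        have := Int.alternating_sum_range_choose_of_ne (n := m + 1) (by omega)
        have : ((∑ i ∈ range (m+2), (-1:ℤ)^i * (m+1).choose i : ℤ) : ℝ) = 0 := by
          rw [this]; norm_num
        rw [cc]
        push_cast at this
        rw [← this]
        exact Finset.sum_congr rfl fun i _ => by ring
      | (k+1) =>
        rw [cc_rec, key_expand]
        have : ∀ l ∈ range (k+1), (k.choose l : ℝ) * cc m l = 0 := by
          intro l hl
          rw [ih.1 l (by simp at hl; omega), mul_zero]
        rw [Finset.sum_eq_zero this, mul_zero]
    refine ⟨hzero, ?_⟩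
    rw [cc_rec, key_expand]
    have : ∀ l ∈ range (m+1), (m.choose l : ℝ) * cc m l
        = if l = m then (m.choose m : ℝ) * cc m m else 0 := by
      intro l hl
      by_cases h : l = m
      · simp [h]
      · rw [ih.1 l (by simp at hl; omega), mul_zero, if_neg h]
    rw [Finset.sum_congr rfl this, Finset.sum_ite_eq' (range (m+1)) m]
    simp only [Finset.mem_range, lt_add_iff_pos_right, if_pos (by omega : m < m + 1)]
    rw [ih.2, Nat.choose_self]
    push_cast [Nat.factorial_succ, pow_succ]
    ring

example : True := trivial

private lemma cc_abs (m k : ℕ) : |cc m k| ≤ 2^m * (m:ℝ)^k := by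
  rw [cc]
  refine (Finset.abs_sum_le_sum_abs _ _).trans ?_
  have : ∀ i ∈ range (m+1), |(m.choose i : ℝ) * (-1)^i * (i:ℝ)^k|
      ≤ (m.choose i : ℝ) * (m:ℝ)^k := by
    intro i hi
    rw [abs_mul, abs_mul, abs_pow, abs_neg, abs_one, one_pow, mul_one,
      Nat.abs_cast, abs_pow, Nat.abs_cast]
    have hi' : (i:ℝ) ≤ (m:ℝ) := by
      simp at hi; exact_mod_cast hi
    exact mul_le_mul_of_nonneg_left (pow_le_pow_left₀ (by positivity) hi' k) (by positivity)
  refine (Finset.sum_le_sum this).trans ?_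
  rw [← Finset.sum_mul]
  have : (∑ i ∈ range (m+1), (m.choose i : ℝ)) = 2^m := by
    rw [← Nat.cast_sum]
    rw [Nat.sum_range_choose]
    push_cast; ring
  rw [this]

private lemma hasSumS (E : ℕ → ℝ)
    (hE : ∀ t : ℝ, |t| < 1 →
      HasSum (fun k : ℕ => E k * t ^ k / (k.factorial : ℝ)) (2 / (Real.exp t + 1)))
    (m : ℕ) {t : ℝ} (ht : 0 < t) (htm : t * m < 1) :
    HasSum (fun k => cc m k * E k * t^k / (k.factorial : ℝ))
      (∑ i ∈ range (m+1), (m.choose i : ℝ) * (-1)^i * (2 / (Real.exp (t*i) + 1))) := by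
  have h1 : ∀ i ∈ range (m+1), HasSum
      (fun k : ℕ => (m.choose i : ℝ) * (-1)^i * (E k * (t*i)^k / (k.factorial : ℝ)))
      ((m.choose i : ℝ) * (-1)^i * (2 / (Real.exp (t*i) + 1))) := by
    intro i hi
    refine HasSum.mul_left _ (hE (t*i) ?_)
    have hi' : (i:ℝ) ≤ (m:ℝ) := by
      simp only [Finset.mem_range] at hi; exact_mod_cast Nat.lt_succ_iff.mp hi
    rw [abs_of_nonneg (by positivity)]
    calc t * i ≤ t * m := by nlinarith
    _ < 1 := htm
  have h2 := hasSum_sum h1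
  have hfun : (fun k : ℕ => cc m k * E k * t^k / (k.factorial : ℝ))
      = fun k : ℕ => ∑ i ∈ range (m+1),
        (m.choose i : ℝ) * (-1)^i * (E k * (t*i)^k / (k.factorial : ℝ)) := by
    funext k
    rw [cc, Finset.sum_mul, Finset.sum_mul, Finset.sum_div]
    exact Finset.sum_congr rfl fun i _ => by rw [mul_pow]; ring
  rw [hfun]
  exact h2

private lemma hasSumT (E : ℕ → ℝ)
    (hE : ∀ t : ℝ, |t| < 1 →
      HasSum (fun k : ℕ => E k * t ^ k / (k.factorial : ℝ)) (2 / (Real.exp t + 1)))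
    (m : ℕ) (hm : 1 ≤ m) {t : ℝ} (ht : 0 < t) (htm : t * m < 1) :
    HasSum (fun n => cc m (n+(m+1)) * E (n+(m+1)) * t^(n+(m+1)) / ((n+(m+1)).factorial : ℝ))
      ((∑ i ∈ range (m+1), (m.choose i : ℝ) * (-1)^i * (2 / (Real.exp (t*i) + 1)))
        - (-1)^m * E m * t^m) := by
  have hS := hasSumS E hE m ht htm
  set f : ℕ → ℝ := fun k => cc m k * E k * t^k / (k.factorial : ℝ) with hf
  have hsum : ∑ i ∈ range (m+1), f i = (-1)^m * E m * t^m := by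
    rw [Finset.sum_eq_single_of_mem m (self_mem_range_succ m)]
    · rw [hf]
      simp only
      rw [(cc_spec m).2]
      field_simp
    · intro i _ hne
      have hlt : i < m := by
        rename_i hi; simp only [Finset.mem_range] at hi; omega
      rw [hf]; simp only [(cc_spec m).1 i hlt, zero_mul, zero_div]
  have := (hasSum_nat_add_iff (f := f) (m+1)).2 (by
    rw [hsum, sub_add_cancel]; exact hS)
  exact this

private lemma T_bound (E : ℕ → ℝ)
    (hE : ∀ t : ℝ, |t| < 1 →
      HasSum (fun k : ℕ => E k * t ^ k / (k.factorial : ℝ)) (2 / (Real.exp t + 1)))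
    (m : ℕ) (hm : 1 ≤ m) {C : ℝ} (hC : ∀ k, |E k| / (k.factorial : ℝ) ≤ C * 2^k)
    {t : ℝ} (ht : 0 < t) (ht2 : t ≤ 1/(4*m)) :
    |(∑ i ∈ range (m+1), (m.choose i : ℝ) * (-1)^i * (2 / (Real.exp (t*i) + 1)))
      - (-1)^m * E m * t^m| ≤ (2 * C * 2^m * (2*m)^(m+1)) * t^(m+1) := by
  have hm0 : (0:ℝ) < m := by exact_mod_cast hm
  have hC0 : 0 ≤ C := by
    have := hC 0; simp at this
    nlinarith [abs_nonneg (E 0)]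
  have htm14 : t * m ≤ 1/4 := by
    calc t * m ≤ (1/(4*m)) * m := mul_le_mul_of_nonneg_right ht2 hm0.le
    _ = 1/4 := by field_simp
  have htm : t * m < 1 := by linarith
  set r : ℝ := 2 * m * t with hrdef
  have hr0 : 0 ≤ r := by positivity
  have hr12 : r ≤ 1/2 := by rw [hrdef]; nlinarith
  have hr1 : r < 1 := by linarith
  have hT := hasSumT E hE m hm ht htm
  set f' : ℕ → ℝ := fun n =>
    cc m (n+(m+1)) * E (n+(m+1)) * t^(n+(m+1)) / (((n+(m+1)).factorial : ℝ)) with hf'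
  have hb : ∀ n, |f' n| ≤ (C * 2^m * r^(m+1)) * r^n := by
    intro n
    set k := n + (m+1) with hk
    have h1 : |f' n| = |cc m k| * (|E k| / (k.factorial : ℝ)) * t^k := by
      rw [hf']
      simp only [← hk]
      rw [abs_div, abs_mul, abs_mul, abs_pow, abs_of_pos ht, Nat.abs_cast]
      ring
    rw [h1]
    have h2 : |cc m k| * (|E k| / (k.factorial : ℝ)) * t^k
        ≤ (2^m * (m:ℝ)^k) * (C * 2^k) * t^k := by
      have h3 : (0:ℝ) ≤ |E k| / (k.factorial : ℝ) := by positivity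
      have h4 : (0:ℝ) ≤ t^k := by positivity
      have hA : (0:ℝ) ≤ 2^m * (m:ℝ)^k := by positivity
      have hmain := mul_le_mul (cc_abs m k) (hC k) h3 hA
      exact mul_le_mul_of_nonneg_right hmain h4
    refine h2.trans (le_of_eq ?_)
    have h5 : (2^m * (m:ℝ)^k) * (C * 2^k) * t^k = C * 2^m * r^k := by
      rw [hrdef, mul_pow, mul_pow]; ring
    rw [h5, hk, pow_add]
    ring
  have hgeo : Summable (fun n : ℕ => (C * 2^m * r^(m+1)) * r^n) :=
    (summable_geometric_of_lt_one hr0 hr1).mul_left _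
  have habs : Summable (fun n => |f' n|) :=
    Summable.of_nonneg_of_le (fun n => abs_nonneg _) hb hgeo
  have h6 : |(∑ i ∈ range (m+1), (m.choose i : ℝ) * (-1)^i * (2 / (Real.exp (t*i) + 1)))
      - (-1)^m * E m * t^m| = |∑' n, f' n| := by rw [hT.tsum_eq]
  rw [h6]
  calc |∑' n, f' n| ≤ ∑' n, |f' n| := by
        simpa using norm_tsum_le_tsum_norm (f := f') (by simpa using habs)
    _ ≤ ∑' n, (C * 2^m * r^(m+1)) * r^n := Summable.tsum_le_tsum hb habs hgeo
    _ = (C * 2^m * r^(m+1)) * (1-r)⁻¹ := by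
        rw [tsum_mul_left, tsum_geometric_of_lt_one hr0 hr1]
    _ ≤ (C * 2^m * r^(m+1)) * 2 := by
        refine mul_le_mul_of_nonneg_left ?_ (by positivity)
        have : (1-r)⁻¹ ≤ ((1:ℝ)/2)⁻¹ := by
          refine inv_anti₀ (by norm_num) (by linarith)
        simpa using this
    _ = (2 * C * 2^m * (2*m)^(m+1)) * t^(m+1) := by
        rw [hrdef, mul_pow]; ring

private lemma sum_eq (m : ℕ) {q : ℝ} (hq0 : 0 < q) :
    ∑ j ∈ range (m+1), (m.choose j : ℝ) * (-1)^j / (1 + q ^ ((j:ℝ) - (m:ℝ)))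
      = (-1)^m * (1/2) * ∑ i ∈ range (m+1),
        (m.choose i : ℝ) * (-1)^i * (2 / (Real.exp ((-Real.log q) * i) + 1)) := by
  rw [← Finset.sum_range_reflect, Finset.mul_sum]
  refine Finset.sum_congr rfl fun j hj => ?_
  have hjm : j ≤ m := by simp only [Finset.mem_range] at hj; omega
  have hred : m + 1 - 1 - j = m - j := by omega
  rw [hred]
  have hc : ((m.choose (m-j)):ℝ) = (m.choose j : ℝ) := by
    rw [Nat.choose_symm hjm]
  have h2 : ((-1:ℝ))^j * (-1)^j = 1 := by
    rw [← pow_add, ← two_mul, pow_mul]; norm_num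
  have hs : ((-1:ℝ))^(m-j) = (-1)^m * (-1)^j := by
    calc ((-1:ℝ))^(m-j) = (-1)^(m-j) * ((-1)^j * (-1)^j) := by rw [h2, mul_one]
    _ = (-1)^(m-j+j) * (-1)^j := by rw [← mul_assoc, ← pow_add]
    _ = (-1)^m * (-1)^j := by rw [Nat.sub_add_cancel hjm]
  have hexp : ((m-j:ℕ):ℝ) - (m:ℝ) = -(j:ℝ) := by
    rw [Nat.cast_sub hjm]; ring
  have hq : q ^ (-(j:ℝ)) = Real.exp ((-Real.log q) * j) := by
    rw [Real.rpow_def_of_pos hq0]; congr 1; ring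
  rw [hc, hs, hexp, hq]
  have hpos : (0:ℝ) < Real.exp ((-Real.log q) * j) + 1 := by positivity
  field_simp
  ring

/-- For `m ≥ 1`, as `q → 1⁻` (within `(0,1)`) the q-Euler number
`E_{m,q} = [2]_q (1-q)^{-m} Σ_{j=0}^m C(m,j)(-1)^j/(1+q^{j-m})` tends to the
ordinary Euler number `E_m`, defined by `2/(e^t+1) = Σ E_m t^m/m!`. -/
theorem q_euler_number_tendsto (E : ℕ → ℝ)
    (hE : ∀ t : ℝ, |t| < 1 →
      HasSum (fun k : ℕ => E k * t ^ k / (k.factorial : ℝ)) (2 / (Real.exp t + 1)))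
    (m : ℕ) (hm : 1 ≤ m) :
    Tendsto (fun q : ℝ => (1 + q) / (1 - q) ^ m *
        ∑ j ∈ Finset.range (m + 1), (m.choose j : ℝ) * (-1) ^ j /
          (1 + q ^ ((j : ℝ) - (m : ℝ))))
      (nhdsWithin 1 (Set.Ioo (0 : ℝ) 1)) (𝓝 (E m)) := by
  have hm0 : (0:ℝ) < m := by exact_mod_cast hm
  -- the bound constant C
  obtain ⟨C, hC⟩ : ∃ C : ℝ, ∀ k, |E k| / (k.factorial : ℝ) ≤ C * 2^k := by
    have hsum := (hE (1/2) (by rw [abs_of_pos (by norm_num)]; norm_num)).summable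
    have h0 := hsum.tendsto_atTop_zero
    have habs : Tendsto (fun k => |E k * (1/2:ℝ)^k / (k.factorial : ℝ)|) atTop (𝓝 0) := by
      simpa using h0.abs
    obtain ⟨C, hCmem⟩ := habs.bddAbove_range
    refine ⟨C, fun k => ?_⟩
    have h1 : |E k * (1/2:ℝ)^k / (k.factorial : ℝ)| ≤ C := hCmem ⟨k, rfl⟩
    have h2 : |E k * (1/2:ℝ)^k / (k.factorial : ℝ)|
        = |E k| / (k.factorial : ℝ) * (1/2:ℝ)^k := by
      rw [abs_div, abs_mul, abs_pow]
      rw [abs_of_pos (by norm_num : (0:ℝ) < 1/2), Nat.abs_cast]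
      ring
    rw [h2] at h1
    have h3 : ((1:ℝ)/2)^k * 2^k = 1 := by
      rw [← mul_pow]; norm_num
    calc |E k| / (k.factorial : ℝ)
        = (|E k| / (k.factorial : ℝ) * (1/2:ℝ)^k) * 2^k := by rw [mul_assoc, h3, mul_one]
      _ ≤ C * 2^k := mul_le_mul_of_nonneg_right h1 (by positivity)
  set K : ℝ := 2 * C * 2^m * (2*m)^(m+1) with hK
  set S : ℝ → ℝ := fun t => ∑ i ∈ range (m+1),
      (m.choose i : ℝ) * (-1)^i * (2 / (Real.exp (t*i) + 1)) with hS
  -- component limits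
  have h1 : Tendsto (fun q : ℝ => (1+q)/2) (𝓝[Set.Ioo (0:ℝ) 1] 1) (𝓝 1) := by
    have : Tendsto (fun q : ℝ => (1+q)/2) (𝓝 1) (𝓝 ((1+1)/2)) :=
      (continuous_const.add continuous_id).div_const 2 |>.tendsto 1
    norm_num at this
    exact this.mono_left nhdsWithin_le_nhds
  have h2 : Tendsto (fun q : ℝ => (-Real.log q)/(1-q)) (𝓝[Set.Ioo (0:ℝ) 1] 1) (𝓝 1) := by
    have hd : HasDerivAt Real.log 1 1 := by
      simpa using Real.hasDerivAt_log one_ne_zero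
    rw [hasDerivAt_iff_tendsto_slope] at hd
    have heq : ∀ q : ℝ, slope Real.log 1 q = (-Real.log q)/(1-q) := by
      intro q
      rw [slope_def_field, Real.log_one, sub_zero,
        show (1:ℝ)-q = -(q-1) from by ring, neg_div_neg_eq]
    have := hd.congr heq
    exact this.mono_left (nhdsWithin_mono 1 (fun x hx => ne_of_lt hx.2))
  have hlog : Tendsto (fun q : ℝ => -Real.log q) (𝓝[Set.Ioo (0:ℝ) 1] 1) (𝓝 0) := by
    have : Tendsto (fun q : ℝ => -Real.log q) (𝓝 1) (𝓝 (-Real.log 1)) :=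
      ((Real.continuousAt_log one_ne_zero).neg).tendsto
    rw [Real.log_one, neg_zero] at this
    exact this.mono_left nhdsWithin_le_nhds
  have h3 : Tendsto (fun q : ℝ => (-1:ℝ)^m *
      (S (-Real.log q) - (-1)^m * E m * (-Real.log q)^m) / (-Real.log q)^m)
      (𝓝[Set.Ioo (0:ℝ) 1] 1) (𝓝 0) := by
    refine squeeze_zero_norm' ?_ (by simpa using hlog.const_mul K)
    have hev : ∀ᶠ q in 𝓝[Set.Ioo (0:ℝ) 1] 1, -Real.log q < 1/(4*m) :=
      hlog.eventually_lt_const (by positivity)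
    filter_upwards [self_mem_nhdsWithin, hev] with q hq hq4
    obtain ⟨hq0, hq1⟩ := hq
    set t : ℝ := -Real.log q with htdef
    have ht : 0 < t := by
      rw [htdef, neg_pos]
      exact Real.log_neg hq0 hq1
    have hTb := T_bound E hE m hm hC ht (le_of_lt hq4)
    rw [Real.norm_eq_abs, abs_div, abs_mul, abs_pow, abs_neg, abs_one, one_pow, one_mul,
      abs_pow, abs_of_pos ht]
    calc |S t - (-1)^m * E m * t^m| / t^m ≤ (K * t^(m+1)) / t^m := by
          apply div_le_div_of_nonneg_right ?_ (by positivity)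
          · exact hTb
      _ = K * t := by
          rw [pow_succ, mul_comm (t^m) t, ← mul_assoc]
          rw [mul_div_assoc, div_self (by positivity : (t:ℝ)^m ≠ 0), mul_one]
      _ = -(K * Real.log q) := by rw [htdef]; ring
  have hneg : ((-1:ℝ))^m * (-1)^m = 1 := by
    rw [← pow_add, ← two_mul, pow_mul]; norm_num
  have hmain : Tendsto (fun q : ℝ => ((1+q)/2) * ((-Real.log q)/(1-q))^m *
      (E m + (-1)^m * (S (-Real.log q) - (-1)^m * E m * (-Real.log q)^m) / (-Real.log q)^m))
      (𝓝[Set.Ioo (0:ℝ) 1] 1) (𝓝 (E m)) := by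
    have := (h1.mul (h2.pow m)).mul
      ((tendsto_const_nhds : Tendsto (fun _ : ℝ => E m) (𝓝[Set.Ioo (0:ℝ) 1] 1) (𝓝 (E m))).add h3)
    simpa using this
  refine hmain.congr' ?_
  filter_upwards [self_mem_nhdsWithin] with q hq
  obtain ⟨hq0, hq1⟩ := hq
  set t : ℝ := -Real.log q with htdef
  have ht : 0 < t := by
    rw [htdef, neg_pos]; exact Real.log_neg hq0 hq1
  have htm : (t:ℝ)^m ≠ 0 := by positivity
  have h1q : (1:ℝ) - q ≠ 0 := by intro h; nlinarith
  obtain ⟨s, hs⟩ : ∃ s : ℝ, ((-1:ℝ))^m = s := ⟨_, rfl⟩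
  have hneg' : s * s = 1 := by rw [← hs]; exact hneg
  have hstep : E m + s * (S t - s * E m * t^m) / t^m = s * S t / t^m := by
    field_simp
    linear_combination (-(E m * Real.log q ^ m) * (-1:ℝ)^m) * hneg'
  rw [sum_eq m hq0]
  rw [show (∑ i ∈ range (m+1), (m.choose i:ℝ)*(-1)^i * (2/(Real.exp ((-Real.log q) * i)+1)))
    = S (-Real.log q) from rfl]
  rw [div_pow, hs, hstep]
  have h1qm : ((1:ℝ) - q)^m ≠ 0 := pow_ne_zero m h1q
  field_simp
  ring
end
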